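/- Let R be the letterwise involution x ↦ 6−x on words over {1,2,3,4,5}. Then for every j in {1,2,3,4} and every word w, the word R(T_j(w)) is a rotation of T_{5−j}(R(w)). -/

import Mathlib

/-- `sigma5 j x` is the representative in `{1,...,5}` of `x - j` mod 5. -/
def sigma5 (j x : ℕ) : ℕ := (x + 4 - j) % 5 + 1

/-- Position of a letter along the path graph 1—4—3—2—5. -/
def pos5 (x : ℕ) : ℕ :=
  match x with
  | 1 => 0 | 4 => 1 | 3 => 2 | 2 => 3 | 5 => 4 | _ => 0

/-- The vertex at a given position of the path graph 1—4—3—2—5. -/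
def vtx5 (i : ℕ) : ℕ := [1, 4, 3, 2, 5].getD i 0

/-- `ins5 x y` is the word of interior vertices, in order, of the unique simple
path from `x` to `y` in the path graph 1—4—3—2—5 (empty if `x = y`). -/
def ins5 (x y : ℕ) : List ℕ :=
  if pos5 x < pos5 y then
    (List.range (pos5 y - pos5 x - 1)).map (fun k => vtx5 (pos5 x + 1 + k))
  else
    (List.range (pos5 x - pos5 y - 1)).map (fun k => vtx5 (pos5 x - 1 - k))

/-- Graph distance in the path graph 1—4—3—2—5. -/
def dist5 (x y : ℕ) : ℕ := max (pos5 x) (pos5 y) - min (pos5 x) (pos5 y)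

/-- Linear transformation `T_j^{lin}`: subtract `j` mod 5 from each letter and insert,
between consecutive letters, the interior vertices of the connecting path (no wrap-around). -/
def Tlin (j : ℕ) : List ℕ → List ℕ
  | [] => []
  | [x] => [sigma5 j x]
  | x :: y :: rest => (sigma5 j x :: ins5 (sigma5 j x) (sigma5 j y)) ++ Tlin j (y :: rest)

/-- Cyclic transformation `T_j`: as `Tlin`, with the wrap-around insertion from the
last letter back to the first appended at the end. -/
def Tcyc (j : ℕ) (w : List ℕ) : List ℕ :=
  Tlin j w ++ ins5 (sigma5 j (w.getLastD 0)) (sigma5 j (w.headD 0))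

/-- A pair-word: a finite concatenation of the two-letter blocks 41, 43, 23, 25. -/
def IsPairWord (w : List ℕ) : Prop :=
  ∃ bs : List (List ℕ), (∀ b ∈ bs, b ∈ [[4,1],[4,3],[2,3],[2,5]]) ∧ w = bs.flatten

/-- `n`-fold repetition of a word. -/
def wpow (w : List ℕ) (n : ℕ) : List ℕ := (List.replicate n w).flatten

lemma sigmaR (j x : ℕ) (hj : j ∈ Finset.Icc 1 4) (hx : x ∈ Finset.Icc 1 5) :
    6 - sigma5 j x = sigma5 (5 - j) (6 - x) := by
  simp only [Finset.mem_Icc] at hj hx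
  obtain ⟨hj1, hj2⟩ := hj
  obtain ⟨hx1, hx2⟩ := hx
  interval_cases j <;> interval_cases x <;> decide

lemma sigma_mem (j x : ℕ) : sigma5 j x ∈ Finset.Icc 1 5 := by
  simp only [sigma5, Finset.mem_Icc]
  have := Nat.mod_lt (x + 4 - j) (show 0 < 5 by norm_num)
  omega

lemma insR (x y : ℕ) (hx : x ∈ Finset.Icc 1 5) (hy : y ∈ Finset.Icc 1 5) :
    (ins5 x y).map (fun z => 6 - z) = ins5 (6 - x) (6 - y) := by
  simp only [Finset.mem_Icc] at hx hy
  obtain ⟨hx1, hx2⟩ := hx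
  obtain ⟨hy1, hy2⟩ := hy
  interval_cases x <;> interval_cases y <;> decide

lemma ins5_self (x : ℕ) : ins5 x x = [] := by
  simp [ins5]

lemma TlinR (j : ℕ) (hj : j ∈ Finset.Icc 1 4) : ∀ w : List ℕ,
    (∀ x ∈ w, x ∈ Finset.Icc 1 5) →
    (Tlin j w).map (fun x => 6 - x) = Tlin (5 - j) (w.map (fun x => 6 - x))
  | [], _ => rfl
  | [x], h => by
      simp [Tlin, sigmaR j x hj (h x (by simp))]
  | x :: y :: rest, h => by
      have hx := h x (by simp)
      have hy := h y (by simp)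
      have ih := TlinR j hj (y :: rest) (fun z hz => h z (by simp [hz]))
      simp only [Tlin, List.map_append, List.map_cons, List.append_eq, List.cons_append] at ih ⊢
      rw [insR _ _ (sigma_mem j x) (sigma_mem j y), sigmaR j x hj hx, sigmaR j y hj hy, ih]

theorem stmt4 (w : List ℕ) (j : ℕ) (hj : j ∈ Finset.Icc 1 4)
    (hw : ∀ x ∈ w, x ∈ Finset.Icc 1 5) :
    (Tcyc j w).map (fun x => 6 - x) ~r Tcyc (5 - j) (w.map (fun x => 6 - x)) := by
  have key : (Tcyc j w).map (fun x => 6 - x) = Tcyc (5 - j) (w.map (fun x => 6 - x)) := by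
    rcases w with _ | ⟨a, t⟩
    · simp [Tcyc, Tlin, ins5_self]
    · have ha := hw a (by simp)
      have hgl : (a :: t).getLastD 0 = (a :: t).getLast (by simp) := by
        rw [List.getLastD_eq_getLast?, List.getLast?_eq_getLast (l := a :: t) (by simp)]
        rfl
      have hlast : (a :: t).getLastD 0 ∈ Finset.Icc 1 5 := by
        rw [hgl]; exact hw _ (List.getLast_mem _)
      have hmaplast : ((a :: t).map (fun x => 6 - x)).getLastD 0
          = 6 - (a :: t).getLastD 0 := by
        rw [List.getLastD_eq_getLast?, List.getLastD_eq_getLast?, List.getLast?_map,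
          List.getLast?_eq_getLast (l := a :: t) (by simp)]
        rfl
      simp only [Tcyc, List.map_append, List.map_cons, List.headD_cons, hmaplast]
      rw [TlinR j hj _ hw, insR _ _ (sigma_mem j _) (sigma_mem j _),
        sigmaR j _ hj hlast, sigmaR j _ hj ha,
        show ((6 - a) :: List.map (fun x => 6 - x) t).getLastD 0
          = 6 - (a :: t).getLastD 0 from hmaplast]
      rfl
  rw [key]
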